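/- If T : L^n → M is a symmetric lattice n-homomorphism between distributive lattices (n ≥ 2), then T satisfies T(x_1 ∧ x_2, x_1 ∨ x_2, x_3,...,x_n) = T(x_1, x_2, x_3,...,x_n) for all x_1,...,x_n ∈ L. -/

import Mathlib

def median {L : Type*} [DistribLattice L] {n : ℕ} (k : ℕ) (hk1 : 1 ≤ k) (hkn : k ≤ n)
    (x : Fin n → L) : L :=
  ((Finset.univ.powersetCard (n + 1 - k)).attach).sup'
    (Finset.attach_nonempty_iff.mpr
      (Finset.powersetCard_nonempty.mpr (by simp [Finset.card_univ]; omega)))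
    fun s => s.1.inf'
      (Finset.card_pos.mp (by
        have h := (Finset.mem_powersetCard.mp s.2).2
        omega)) x

def medianInf {L : Type*} [DistribLattice L] {n : ℕ} (k : ℕ) (hk1 : 1 ≤ k) (hkn : k ≤ n)
    (x : Fin n → L) : L :=
  ((Finset.univ.powersetCard (n + 1 - k)).attach).inf'
    (Finset.attach_nonempty_iff.mpr
      (Finset.powersetCard_nonempty.mpr (by simp [Finset.card_univ]; omega)))
    fun s => s.1.sup'
      (Finset.card_pos.mp (by
        have h := (Finset.mem_powersetCard.mp s.2).2
        omega)) x
def TotalOrderizationInvariant {L : Type*} [DistribLattice L] {A : Type*} {n : ℕ}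
    (T : (Fin n → L) → A) : Prop :=
  ∀ x : Fin n → L,
    T x = T fun k => median (k.1 + 1) (Nat.succ_le_succ (Nat.zero_le _)) k.2 x

/-- `T` is symmetric: invariant under every permutation of its arguments. -/
def IsSymmetricMap {L A : Type*} {n : ℕ} (T : (Fin n → L) → A) : Prop :=
  ∀ (σ : Equiv.Perm (Fin n)) (x : Fin n → L), T (x ∘ σ) = T x
/-- `T : Lⁿ → M` is a lattice n-homomorphism: in each coordinate separately it
preserves binary joins and binary meets. -/
def IsLatticeMultiHom {L M : Type*} [DistribLattice L] [DistribLattice M] {n : ℕ}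
    (T : (Fin n → L) → M) : Prop :=
  ∀ (x : Fin n → L) (i : Fin n) (y : L),
    T (Function.update x i (x i ⊔ y)) = T x ⊔ T (Function.update x i y) ∧
    T (Function.update x i (x i ⊓ y)) = T x ⊓ T (Function.update x i y)

/-- `P : L → M` is a lattice homomorphism. -/
def IsLatticeHomMap {L M : Type*} [DistribLattice L] [DistribLattice M] (P : L → M) : Prop :=
  ∀ a b : L, P (a ⊔ b) = P a ⊔ P b ∧ P (a ⊓ b) = P a ⊓ P b

theorem symm_multiHom_meetJoin_aux {L M : Type*} [DistribLattice L] [DistribLattice M]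
    {n : ℕ} (T : (Fin n → L) → M) (hT : IsLatticeMultiHom T)
    (hsymm : IsSymmetricMap T) (i0 i1 : Fin n) (hne : i0 ≠ i1) (x : Fin n → L) :
    T (Function.update (Function.update x i0 (x i0 ⊓ x i1)) i1 (x i0 ⊔ x i1)) = T x := by
  have hne' : i1 ≠ i0 := hne.symm
  set a := x i0 with ha
  set b := x i1 with hb
  -- swapped vector has same value
  have hswap : T (Function.update (Function.update x i0 b) i1 a) = T x := by
    rw [← hsymm (Equiv.swap i0 i1) x]
    congr 1
    funext j
    rcases eq_or_ne j i1 with rfl | h1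
    · simp [Function.update_of_ne hne', Equiv.swap_apply_right, ha]
    · rcases eq_or_ne j i0 with rfl | h0
      · simp [Function.update_of_ne h1, Equiv.swap_apply_left, hb]
      · simp [Function.update_of_ne h1, Function.update_of_ne h0,
          Equiv.swap_apply_of_ne_of_ne h0 h1]
  set p := T (Function.update x i1 a) with hp
  set q := T x with hq
  set r := T (Function.update x i0 b) with hr
  -- first expansion: LHS = (q ⊓ r) ⊔ (p ⊓ q)
  have e1 : T (Function.update (Function.update x i0 (a ⊓ b)) i1 (a ⊔ b))
      = (q ⊓ r) ⊔ (p ⊓ q) := by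
    have hA1 : (Function.update x i0 (a ⊓ b)) i1 = b := by
      rw [Function.update_of_ne hne']
    have step1 := (hT (Function.update x i0 (a ⊓ b)) i1 a).1
    rw [hA1] at step1
    rw [sup_comm b a] at step1
    rw [step1]
    have hTA : T (Function.update x i0 (a ⊓ b)) = q ⊓ r := by
      have := (hT x i0 b).2
      rw [← ha] at this
      exact this
    have hTB : T (Function.update (Function.update x i0 (a ⊓ b)) i1 a) = p ⊓ q := by
      rw [Function.update_comm hne]
      have hB0 : (Function.update x i1 a) i0 = a := Function.update_of_ne hne _ _
      have := (hT (Function.update x i1 a) i0 b).2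
      rw [hB0] at this
      rw [this, Function.update_comm hne', hswap]
    rw [hTA, hTB]
  -- second expansion: LHS = (q ⊔ p) ⊓ (r ⊔ q)
  have e2 : T (Function.update (Function.update x i0 (a ⊓ b)) i1 (a ⊔ b))
      = (q ⊔ p) ⊓ (r ⊔ q) := by
    rw [Function.update_comm hne]
    have hC0 : (Function.update x i1 (a ⊔ b)) i0 = a := Function.update_of_ne hne _ _
    have step1 := (hT (Function.update x i1 (a ⊔ b)) i0 b).2
    rw [hC0] at step1
    rw [step1]
    have hTC : T (Function.update x i1 (a ⊔ b)) = q ⊔ p := by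
      have := (hT x i1 a).1
      rw [← hb, sup_comm b a] at this
      exact this
    have hTD : T (Function.update (Function.update x i1 (a ⊔ b)) i0 b) = r ⊔ q := by
      rw [Function.update_comm hne']
      have hD1 : (Function.update x i0 b) i1 = b := Function.update_of_ne hne' _ _
      have := (hT (Function.update x i0 b) i1 a).1
      rw [hD1, sup_comm b a] at this
      rw [this, hswap]
    rw [hTC, hTD]
  refine le_antisymm ?_ ?_
  · rw [e1]; exact sup_le inf_le_left inf_le_right
  · rw [e2]; exact le_inf le_sup_left le_sup_right

/-- A symmetric lattice n-homomorphism is invariant under replacing its first two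
arguments by their meet and join. -/
theorem symm_multiHom_meetJoin {L M : Type*} [DistribLattice L] [DistribLattice M]
    {n : ℕ} (hn : 2 ≤ n) (T : (Fin n → L) → M) (hT : IsLatticeMultiHom T)
    (hsymm : IsSymmetricMap T) (x : Fin n → L) :
    T (Function.update
        (Function.update x ⟨0, by omega⟩ (x ⟨0, by omega⟩ ⊓ x ⟨1, by omega⟩))
        ⟨1, by omega⟩ (x ⟨0, by omega⟩ ⊔ x ⟨1, by omega⟩)) = T x := by
  exact symm_multiHom_meetJoin_aux T hT hsymm ⟨0, by omega⟩ ⟨1, by omega⟩ (by simp [Fin.ext_iff]) x
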